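/- The function t ↦ [ (1+t²)·√(4+t²) + 3t + t³ ] / (2t(4+t²)) on (0,∞) attains its minimum at t = 2/√3, and its value there equals 27/32; equivalently, the minimizing abscissa of the curve is x(2/√3) = (3/4)·√(3/2), whose square is 27/32. -/

import Mathlib

noncomputable def xsq (t : ℝ) : ℝ :=
  ((1 + t ^ 2) * Real.sqrt (4 + t ^ 2) + 3 * t + t ^ 3) / (2 * t * (4 + t ^ 2))

theorem xsq_min :
    xsq (2 / Real.sqrt 3) = 27 / 32 ∧
    (∀ t : ℝ, 0 < t → 27 / 32 ≤ xsq t) := by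
  constructor
  · have h3 : Real.sqrt 3 ^ 2 = 3 := Real.sq_sqrt (by norm_num)
    have h3pos : (0:ℝ) < Real.sqrt 3 := Real.sqrt_pos.mpr (by norm_num)
    have h33 : Real.sqrt 3 ^ 3 = 3 * Real.sqrt 3 := by
      rw [pow_succ, h3]
    have ht2 : (4 : ℝ) + (2 / Real.sqrt 3) ^ 2 = 16 / 3 := by
      field_simp
      nlinarith [h3]
    have hsqrt : Real.sqrt (16 / 3) = 4 / Real.sqrt 3 := by
      rw [show (16:ℝ)/3 = (4 / Real.sqrt 3)^2 by field_simp; nlinarith [h3]]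
      exact Real.sqrt_sq (by positivity)
    unfold xsq
    rw [ht2, hsqrt]
    field_simp
    rw [h3]
    nlinarith [h3, h3pos]
  · intro t ht
    set s := Real.sqrt (4 + t ^ 2) with hs
    have hs2 : s ^ 2 = 4 + t ^ 2 := Real.sq_sqrt (by positivity)
    have hs0 : 0 < s := Real.sqrt_pos.mpr (by positivity)
    have hD : 0 < 2 * t * (4 + t ^ 2) := by positivity
    rw [xsq, le_div_iff₀ hD]
    have hB : (0:ℝ) < 27 / 32 * (2 * t * (4 + t ^ 2)) - 3 * t - t ^ 3 := by
      nlinarith [mul_pos ht (mul_pos ht ht)]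
    have hAs : (0:ℝ) < (1 + t ^ 2) * s := by positivity
    have h1 : (27 / 32 * (2 * t * (4 + t ^ 2)) - 3 * t - t ^ 3) ^ 2 ≤ ((1 + t ^ 2) * s) ^ 2 := by
      have he : ((1 + t ^ 2) * s) ^ 2 = (1 + t ^ 2) ^ 2 * (4 + t ^ 2) := by
        rw [mul_pow, hs2]
      rw [he]
      nlinarith [mul_nonneg (sq_nonneg (3 * t ^ 2 - 4)) (mul_pos ht ht).le]
    have h2 : 27 / 32 * (2 * t * (4 + t ^ 2)) - 3 * t - t ^ 3 ≤ (1 + t ^ 2) * s := by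
      nlinarith [h1, hAs, hB]
    linarith
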